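/- Proposition (follower payoffs in 2×2 games): Let Γ be a non-degenerate 2×2 bimatrix game such that conditions (ℓ1) and (ℓ2) hold for player I, namely: (ℓ1) some pure strategy of player I is strongly dominated (there exist i and x' ∈ X with α(x',e_j) > α(e_i,e_j) for all j), and (ℓ2) player I has an equalizing strategy x^d ∈ X over the follower's payoffs (i.e. (x^dᵀB)_1 = (x^dᵀB)_2) such that for every Nash equilibrium (x^N,y^N) of Γ there is a pure strategy j with α(x^d,e_j) ≥ α(x^N,y^N). Then for every Nash equilibrium (x^N,y^N) of Γ, the following are equivalent: (a) there exist x^L ∈ X^L and j^F ∈ BR_II(x^L) with α(x^L,e_{j^F}) = α^L and β(x^L,e_{j^F}) < β(x^N,y^N); (b) v_B < β(x^N,y^N), where v_B = max_{y∈Y} min_i β(e_i,y) is the matrix game value of player II. -/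
import Mathlib


open Matrix

noncomputable section

/-- The set of mixed strategies: the standard simplex in `ℝ^m`. -/
def Simp (m : ℕ) : Set (Fin m → ℝ) := stdSimplex ℝ (Fin m)

/-- Bilinear payoff `xᵀ A y`. -/
def pay {m n : ℕ} (A : Matrix (Fin m) (Fin n) ℝ) (x : Fin m → ℝ) (y : Fin n → ℝ) : ℝ :=
  x ⬝ᵥ A.mulVec y

/-- Payoff of a mixed strategy `x` against the pure strategy `j`: `α(x, e_j) = (xᵀA)_j`. -/
def purePay {m n : ℕ} (A : Matrix (Fin m) (Fin n) ℝ) (x : Fin m → ℝ) (j : Fin n) : ℝ :=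
  Matrix.vecMul x A j

/-- Pure best replies of player II against `x`. -/
def BRII {m n : ℕ} (B : Matrix (Fin m) (Fin n) ℝ) (x : Fin m → ℝ) : Set (Fin n) :=
  {j | ∀ k, purePay B x k ≤ purePay B x j}

/-- Best-reply region `X(j)` of column `j`. -/
def XReg {m n : ℕ} (B : Matrix (Fin m) (Fin n) ℝ) (j : Fin n) : Set (Fin m → ℝ) :=
  {x ∈ Simp m | j ∈ BRII B x}

/-- `D`: columns whose best-reply region has a fully mixed point. -/
def Dset {m n : ℕ} (B : Matrix (Fin m) (Fin n) ℝ) : Set (Fin n) :=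
  {j | ∃ x ∈ XReg B j, ∀ i, 0 < x i}

/-- `E(j)`: columns of `B` payoff-equivalent to column `j`. -/
def Ecols {m n : ℕ} (B : Matrix (Fin m) (Fin n) ℝ) (j : Fin n) : Set (Fin n) :=
  {k | ∀ i, B i k = B i j}

/-- `min_j α(x, e_j)`. -/
def minPure {m n : ℕ} (A : Matrix (Fin m) (Fin n) ℝ) (x : Fin m → ℝ) : ℝ :=
  sInf {w | ∃ j, w = purePay A x j}

/-- `max_j α(x, e_j)`. -/
def maxPure {m n : ℕ} (A : Matrix (Fin m) (Fin n) ℝ) (x : Fin m → ℝ) : ℝ :=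
  sSup {w | ∃ j, w = purePay A x j}

/-- `max_{j ∈ BR_II(x)} α(x, e_j)`. -/
def maxBR {m n : ℕ} (A B : Matrix (Fin m) (Fin n) ℝ) (x : Fin m → ℝ) : ℝ :=
  sSup {w | ∃ j ∈ BRII B x, w = purePay A x j}

/-- Matrix game value `v_A = max_{x ∈ X} min_j α(x, e_j)`. -/
def matVal {m n : ℕ} (A : Matrix (Fin m) (Fin n) ℝ) : ℝ :=
  sSup {v | ∃ x ∈ Simp m, v = minPure A x}

/-- `min_{k ∈ E(j)} α(x, e_k)`. -/
def minE {m n : ℕ} (A B : Matrix (Fin m) (Fin n) ℝ) (j : Fin n) (x : Fin m → ℝ) : ℝ :=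
  sInf {w | ∃ k ∈ Ecols B j, w = purePay A x k}

/-- Commitment value `α^L = max_{j∈D} max_{x∈X(j)} min_{k∈E(j)} α(x,e_k)`. -/
def alphaL {m n : ℕ} (A B : Matrix (Fin m) (Fin n) ℝ) : ℝ :=
  sSup {v | ∃ j ∈ Dset B, ∃ x ∈ XReg B j, v = minE A B j x}

/-- Highest leader payoff `α^H = max_{j : X(j)≠∅} max_{x∈X(j)} α(x,e_j)`. -/
def alphaH {m n : ℕ} (A B : Matrix (Fin m) (Fin n) ℝ) : ℝ :=
  sSup {v | ∃ j, ∃ x ∈ XReg B j, v = purePay A x j}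

/-- Commitment optimal strategies of the leader (player I). -/
def XLset {m n : ℕ} (A B : Matrix (Fin m) (Fin n) ℝ) : Set (Fin m → ℝ) :=
  {x | ∃ j ∈ Dset B, x ∈ XReg B j ∧ minE A B j x = alphaL A B}

/-- Non-degeneracy for player I: no mixed strategy of player I has more pure best
replies (among player II's pure strategies) than the size of its support. -/
def NondegFor {m n : ℕ} (B : Matrix (Fin m) (Fin n) ℝ) : Prop :=
  ∀ x ∈ Simp m, (BRII B x).ncard ≤ {i | x i ≠ 0}.ncard

/-- Nash equilibrium of the bimatrix game `(A,B)`. -/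
def isNE {m n : ℕ} (A B : Matrix (Fin m) (Fin n) ℝ) (x : Fin m → ℝ) (y : Fin n → ℝ) : Prop :=
  x ∈ Simp m ∧ y ∈ Simp n ∧
  (∀ x' ∈ Simp m, pay A x' y ≤ pay A x y) ∧
  (∀ y' ∈ Simp n, pay B x y' ≤ pay B x y)

/-- Strategies of player I appearing in some Nash equilibrium. -/
def NEX {m n : ℕ} (A B : Matrix (Fin m) (Fin n) ℝ) : Set (Fin m → ℝ) :=
  {x | ∃ y, isNE A B x y}

/-- Strategies of player II appearing in some Nash equilibrium. -/
def NEY {m n : ℕ} (A B : Matrix (Fin m) (Fin n) ℝ) : Set (Fin n → ℝ) :=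
  {y | ∃ x, isNE A B x y}

/-- Weakly unilaterally competitive bimatrix game. -/
def WUC {m n : ℕ} (A B : Matrix (Fin m) (Fin n) ℝ) : Prop :=
  (∀ x₁ ∈ Simp m, ∀ x₂ ∈ Simp m, ∀ y ∈ Simp n,
    (pay A x₁ y > pay A x₂ y → pay B x₁ y ≤ pay B x₂ y) ∧
    (pay A x₁ y = pay A x₂ y → pay B x₁ y = pay B x₂ y)) ∧
  (∀ y₁ ∈ Simp n, ∀ y₂ ∈ Simp n, ∀ x ∈ Simp m,
    (pay B x y₁ > pay B x y₂ → pay A x y₁ ≤ pay A x y₂) ∧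
    (pay B x y₁ = pay B x y₂ → pay A x y₁ = pay A x y₂))

section Helpers

lemma fin2_pairs : ∀ {d i : Fin 2}, d ≠ i → (d = 0 ∧ i = 1) ∨ (d = 1 ∧ i = 0) := by decide

lemma two_cases {d i : Fin 2} (h : d ≠ i) (k : Fin 2) : k = d ∨ k = i := by
  rcases fin2_pairs h with ⟨rfl, rfl⟩ | ⟨rfl, rfl⟩ <;> revert k <;> decide

lemma mem_simp2 {x : Fin 2 → ℝ} : x ∈ Simp 2 ↔ (∀ k, 0 ≤ x k) ∧ x 0 + x 1 = 1 := by
  simp [Simp, stdSimplex, Fin.sum_univ_two, Set.mem_setOf_eq]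

lemma simp_sum {d i : Fin 2} (h : d ≠ i) {x : Fin 2 → ℝ} (hx : x ∈ Simp 2) :
    x d + x i = 1 := by
  have h2 := mem_simp2.mp hx
  rcases fin2_pairs h with ⟨rfl, rfl⟩ | ⟨rfl, rfl⟩
  · exact h2.2
  · linarith [h2.2]

lemma purePay_expand (A : Matrix (Fin 2) (Fin 2) ℝ) {d i : Fin 2} (h : d ≠ i)
    (x : Fin 2 → ℝ) (j : Fin 2) :
    purePay A x j = x d * A d j + x i * A i j := by
  rcases fin2_pairs h with ⟨rfl, rfl⟩ | ⟨rfl, rfl⟩ <;>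
    (simp only [purePay, Matrix.vecMul, dotProduct, Fin.sum_univ_two]; try ring)

lemma pay_expand (A : Matrix (Fin 2) (Fin 2) ℝ) {js jo : Fin 2} (h : jo ≠ js)
    (x y : Fin 2 → ℝ) :
    pay A x y = y js * purePay A x js + y jo * purePay A x jo := by
  rcases fin2_pairs h with ⟨rfl, rfl⟩ | ⟨rfl, rfl⟩ <;>
    (simp only [pay, purePay, Matrix.mulVec, Matrix.vecMul, dotProduct,
      Fin.sum_univ_two]; try ring)

lemma single_mem (d : Fin 2) : Pi.single d (1:ℝ) ∈ Simp 2 := by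
  refine mem_simp2.mpr ⟨fun k => ?_, ?_⟩
  · simp only [Pi.single_apply]; split <;> norm_num
  · fin_cases d <;> simp [Pi.single_apply]

lemma range_pair (f : Fin 2 → ℝ) : {w | ∃ k, w = f k} = {f 0, f 1} := by
  ext w
  simp only [Set.mem_setOf_eq, Set.mem_insert_iff, Set.mem_singleton_iff]
  constructor
  · rintro ⟨k, rfl⟩
    rcases two_cases (show (0:Fin 2) ≠ 1 by decide) k with rfl | rfl
    · exact Or.inl rfl
    · exact Or.inr rfl
  · rintro (rfl | rfl)
    · exact ⟨0, rfl⟩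
    · exact ⟨1, rfl⟩

lemma minPure_eq (A : Matrix (Fin 2) (Fin 2) ℝ) (x : Fin 2 → ℝ) :
    minPure A x = purePay A x 0 ⊓ purePay A x 1 := by
  unfold minPure
  rw [range_pair]
  exact csInf_pair _ _

end Helpers
section Helpers2

lemma BRII_univ_of_eq {B : Matrix (Fin 2) (Fin 2) ℝ} {x : Fin 2 → ℝ}
    (heq : purePay B x 0 = purePay B x 1) : ∀ j, j ∈ BRII B x := by
  intro j
  show ∀ k, purePay B x k ≤ purePay B x j
  intro k
  rcases two_cases (show (0:Fin 2) ≠ 1 by decide) k with rfl | rfl <;>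
    rcases two_cases (show (0:Fin 2) ≠ 1 by decide) j with rfl | rfl
  · exact le_refl _
  · exact le_of_eq heq
  · exact le_of_eq heq.symm
  · exact le_refl _

lemma support_two {B : Matrix (Fin 2) (Fin 2) ℝ} (hnd : NondegFor B) {x : Fin 2 → ℝ}
    (hx : x ∈ Simp 2) (heq : purePay B x 0 = purePay B x 1) : ∀ k, 0 < x k := by
  have hs := hnd x hx
  have hBR : BRII B x = Set.univ := by
    ext j; simpa using BRII_univ_of_eq heq j
  rw [hBR, Set.ncard_univ, Nat.card_eq_fintype_card, Fintype.card_fin] at hs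
  intro k
  rcases (mem_simp2.mp hx).1 k |>.lt_or_eq with h | h
  · exact h
  · exfalso
    obtain ⟨m, hmk⟩ : ∃ m : Fin 2, m ≠ k := by
      rcases two_cases (show (0:Fin 2) ≠ 1 by decide) k with rfl | rfl
      · exact ⟨1, by decide⟩
      · exact ⟨0, by decide⟩
    have hsub : {i | x i ≠ 0} ⊆ {m} := by
      intro a ha
      rcases two_cases hmk.symm a with rfl | rfl
      · exact absurd h.symm ha
      · rfl
    have := Set.ncard_le_ncard hsub (Set.finite_singleton m)
    rw [Set.ncard_singleton] at this
    omega

lemma row_ne {B : Matrix (Fin 2) (Fin 2) ℝ} (hnd : NondegFor B) (d i : Fin 2)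
    (hdi : d ≠ i) : B d 0 ≠ B d 1 := by
  intro hrow
  have heq : purePay B (Pi.single d (1:ℝ)) 0 = purePay B (Pi.single d (1:ℝ)) 1 := by
    rw [purePay_expand B hdi, purePay_expand B hdi, Pi.single_eq_same,
      Pi.single_eq_of_ne hdi.symm, hrow]
    ring
  have := support_two hnd (single_mem d) heq i
  rw [Pi.single_eq_of_ne hdi.symm] at this
  exact lt_irrefl _ this

lemma matVal_le (B : Matrix (Fin 2) (Fin 2) ℝ) {x : Fin 2 → ℝ} (hx : x ∈ Simp 2)
    {jF : Fin 2} (hjF : jF ∈ BRII B x) : matVal Bᵀ ≤ purePay B x jF := by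
  have h01 : (0:Fin 2) ≠ 1 := by decide
  unfold matVal
  have hne : Set.Nonempty {v | ∃ y ∈ Simp 2, v = minPure Bᵀ y} :=
    ⟨minPure Bᵀ (Pi.single 0 1), Pi.single 0 1, single_mem 0, rfl⟩
  apply csSup_le hne
  rintro v ⟨y, hy, rfl⟩
  have hym := mem_simp2.mp hy
  have hxm := mem_simp2.mp hx
  have hpt : ∀ k, purePay Bᵀ y k = y 0 * B k 0 + y 1 * B k 1 := fun k => by
    rw [purePay_expand Bᵀ h01]; simp [Matrix.transpose_apply]
  have hbr0 : purePay B x 0 ≤ purePay B x jF := hjF 0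
  have hbr1 : purePay B x 1 ≤ purePay B x jF := hjF 1
  rw [minPure_eq]
  calc purePay Bᵀ y 0 ⊓ purePay Bᵀ y 1
      ≤ x 0 * purePay Bᵀ y 0 + x 1 * purePay Bᵀ y 1 := by
        set m := purePay Bᵀ y 0 ⊓ purePay Bᵀ y 1 with hm
        have h0 : m ≤ purePay Bᵀ y 0 := inf_le_left
        have h1 : m ≤ purePay Bᵀ y 1 := inf_le_right
        have hmm : x 0 * m + x 1 * m = m := by
          have : x 0 * m + x 1 * m = (x 0 + x 1) * m := by ring
          rw [this, hxm.2, one_mul]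
        linarith [mul_le_mul_of_nonneg_left h0 (hxm.1 0),
          mul_le_mul_of_nonneg_left h1 (hxm.1 1)]
    _ = y 0 * purePay B x 0 + y 1 * purePay B x 1 := by
        rw [hpt 0, hpt 1, purePay_expand B h01, purePay_expand B h01]; ring
    _ ≤ (y 0 + y 1) * purePay B x jF := by
        have hr : (y 0 + y 1) * purePay B x jF
            = y 0 * purePay B x jF + y 1 * purePay B x jF := by ring
        rw [hr]
        exact add_le_add (mul_le_mul_of_nonneg_left hbr0 (hym.1 0))
          (mul_le_mul_of_nonneg_left hbr1 (hym.1 1))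
    _ = purePay B x jF := by rw [hym.2]; ring

end Helpers2
set_option maxHeartbeats 1000000 in
theorem main_lemma (A B : Matrix (Fin 2) (Fin 2) ℝ) (i d js jo : Fin 2)
    (hdi : d ≠ i) (hj : jo ≠ js)
    (hdom : ∀ j, A i j < A d j) (hBd : B d jo < B d js)
    (hnd : NondegFor B)
    (xd : Fin 2 → ℝ) (hxd : xd ∈ Simp 2)
    (heq : purePay B xd 0 = purePay B xd 1)
    (xN yN : Fin 2 → ℝ) (hNE : isNE A B xN yN)
    (hge : ∃ j, pay A xN yN ≤ purePay A xd j) :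
    ((∃ xL ∈ XLset A B, ∃ jF ∈ BRII B xL,
        purePay A xL jF = alphaL A B ∧ purePay B xL jF < pay B xN yN) ↔
      matVal Bᵀ < pay B xN yN) := by
  obtain ⟨hxN, hyN, hNEa, hNEb⟩ := hNE
  have hxdm := mem_simp2.mp hxd
  have hxd_sum : xd d + xd i = 1 := simp_sum hdi hxd
  have hxNm := mem_simp2.mp hxN
  have hxN_sum : xN d + xN i = 1 := simp_sum hdi hxN
  have hyNm := mem_simp2.mp hyN
  have hyN_sum : yN js + yN jo = 1 := simp_sum hj.symm hyN
  have heq' : purePay B xd js = purePay B xd jo := by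
    rcases fin2_pairs hj with ⟨rfl, rfl⟩ | ⟨rfl, rfl⟩
    · exact heq.symm
    · exact heq
  have hxdpos : ∀ k, 0 < xd k := support_two hnd hxd heq
  have hBRxd : ∀ j, j ∈ BRII B xd := BRII_univ_of_eq heq
  -- x^N is the pure strategy e_d
  have hΔs := sub_pos.mpr (hdom js)
  have hΔo := sub_pos.mpr (hdom jo)
  have hxNi : xN i = 0 := by
    by_contra hne
    have hpos : 0 < xN i := lt_of_le_of_ne (hxNm.1 i) (Ne.symm hne)
    have h1 := hNEa (Pi.single d 1) (single_mem d)
    rw [pay_expand A hj, pay_expand A hj] at h1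
    have e1 : ∀ j, purePay A (Pi.single d (1:ℝ)) j = A d j := fun j => by
      rw [purePay_expand A hdi, Pi.single_eq_same, Pi.single_eq_of_ne hdi.symm]; ring
    rw [e1, e1, purePay_expand A hdi, purePay_expand A hdi] at h1
    have key : 0 < yN js * (A d js - A i js) + yN jo * (A d jo - A i jo) := by
      rcases lt_or_ge 0 (yN js) with h | h
      · nlinarith [mul_pos h hΔs, mul_nonneg (hyNm.1 jo) hΔo.le]
      · have hjopos : 0 < yN jo := by linarith [hyNm.1 js]
        nlinarith [mul_pos hjopos hΔo, mul_nonneg (hyNm.1 js) hΔs.le]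
    have hxNd : xN d = 1 - xN i := by linarith
    rw [hxNd] at h1
    nlinarith [mul_pos hpos key]
  have hxNd : xN d = 1 := by linarith
  -- y^N is the pure strategy e_{js}
  have hpB : ∀ j, purePay B xN j = B d j := fun j => by
    rw [purePay_expand B hdi, hxNi, hxNd]; ring
  have h2 := hNEb (Pi.single js 1) (single_mem js)
  rw [pay_expand B hj, pay_expand B hj, hpB, hpB,
    Pi.single_eq_same, Pi.single_eq_of_ne hj] at h2
  have hyNjo : yN jo = 0 := by
    have hsub : yN js = 1 - yN jo := by linarith
    rw [hsub] at h2
    nlinarith [hyNm.1 jo, hBd]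
  have hyNjs : yN js = 1 := by linarith
  have hpayB : pay B xN yN = B d js := by
    rw [pay_expand B hj, hpB, hpB, hyNjs, hyNjo]; ring
  have hpayA : pay A xN yN = A d js := by
    rw [pay_expand A hj, purePay_expand A hdi, purePay_expand A hdi,
      hxNi, hxNd, hyNjs, hyNjo]; ring
  -- consequence of (ℓ2)
  have hub : purePay A xd js < A d js := by
    rw [purePay_expand A hdi]
    have e : xd d = 1 - xd i := by linarith
    rw [e]
    nlinarith [mul_pos (hxdpos i) hΔs]
  have hαL0 : A d js ≤ purePay A xd jo := by
    obtain ⟨j, hjle⟩ := hge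
    rw [hpayA] at hjle
    rcases two_cases hj j with rfl | rfl
    · exact hjle
    · linarith
  -- columns of B are distinct
  have hEcols : ∀ j, Ecols B j = {j} := by
    intro j
    ext k
    simp only [Ecols, Set.mem_setOf_eq, Set.mem_singleton_iff]
    constructor
    · intro hall
      by_contra hkj
      have hd := hall d
      rcases two_cases hj k with rfl | rfl <;> rcases two_cases hj j with rfl | rfl
      · exact hkj rfl
      · exact absurd hd (ne_of_lt hBd)
      · exact absurd hd.symm (ne_of_lt hBd)
      · exact hkj rfl
    · rintro rfl
      intro i'; rfl
  have hminE : ∀ j x, minE A B j x = purePay A x j := by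
    intro j x
    unfold minE
    rw [hEcols]
    have hset : {w | ∃ k ∈ ({j} : Set (Fin 2)), w = purePay A x k}
        = {purePay A x j} := by
      ext w; simp
    rw [hset]
    exact csInf_singleton _
  -- jo is an inducible column
  have hjoD : jo ∈ Dset B := ⟨xd, ⟨hxd, hBRxd jo⟩, hxdpos⟩
  -- the commitment value is α(x^d, e_{jo})
  have hSub : ∀ v ∈ {v | ∃ j ∈ Dset B, ∃ x ∈ XReg B j, v = minE A B j x},
      v ≤ purePay A xd jo := by
    rintro v ⟨j, hjD, x, hxReg, rfl⟩
    rw [hminE]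
    obtain ⟨hxS, hxBR⟩ := hxReg
    have hxm := mem_simp2.mp hxS
    have hxsum : x d + x i = 1 := simp_sum hdi hxS
    rcases two_cases hj j with h | h
    · -- j = jo : use the best-reply region inequality
      rw [h] at hxBR ⊢
      have hreg : purePay B x js ≤ purePay B x jo := hxBR js
      rw [purePay_expand B hdi, purePay_expand B hdi] at hreg
      have heqx : xd d * B d js + xd i * B i js = xd d * B d jo + xd i * B i jo := by
        have h3 := heq'
        rw [purePay_expand B hdi, purePay_expand B hdi] at h3
        exact h3
      have e5 : x i = 1 - x d := by linarith
      have e6 : xd i = 1 - xd d := by linarith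
      rw [e5] at hreg
      rw [e6] at heqx
      have hdd1 : 0 < 1 - xd d := by linarith [hxdpos i]
      have hQ : 0 < B i jo - B i js := by
        nlinarith [mul_pos (hxdpos d) (sub_pos.mpr hBd), hdd1]
      have h4 : x d * (xd d * B d js + (1 - xd d) * B i js)
          = x d * (xd d * B d jo + (1 - xd d) * B i jo) := by rw [heqx]
      have h3 : x d * (1 - xd d) * (B i jo - B i js)
          ≤ xd d * (1 - x d) * (B i jo - B i js) := by
        linarith [mul_le_mul_of_nonneg_left hreg (hxdpos d).le, h4]
      have hxled : x d ≤ xd d := by nlinarith [h3, hQ]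
      rw [purePay_expand A hdi, purePay_expand A hdi, e5, e6]
      linarith [mul_le_mul_of_nonneg_right hxled hΔo.le]
    · -- j = js
      rw [h] at hxBR ⊢
      have h6 : purePay A x js ≤ A d js := by
        rw [purePay_expand A hdi]
        have e : x d = 1 - x i := by linarith
        rw [e]
        nlinarith [mul_nonneg (hxm.1 i) hΔs.le]
      linarith
  have hSne : purePay A xd jo
      ∈ {v | ∃ j ∈ Dset B, ∃ x ∈ XReg B j, v = minE A B j x} :=
    ⟨jo, hjoD, xd, ⟨hxd, hBRxd jo⟩, (hminE jo xd).symm⟩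
  have halphaL : alphaL A B = purePay A xd jo := by
    unfold alphaL
    exact le_antisymm (csSup_le ⟨_, hSne⟩ hSub) (le_csSup ⟨_, hSub⟩ hSne)
  have hxdXL : xd ∈ XLset A B :=
    ⟨jo, hjoD, ⟨hxd, hBRxd jo⟩, by rw [hminE, halphaL]⟩
  constructor
  · rintro ⟨xL, hxL, jF, hjF, -, hβ⟩
    have hxLS : xL ∈ Simp 2 := by
      obtain ⟨j, hjD, ⟨hxS, -⟩, -⟩ := hxL
      exact hxS
    exact lt_of_le_of_lt (matVal_le B hxLS hjF) hβ
  · intro hv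
    refine ⟨xd, hxdXL, jo, hBRxd jo, by rw [halphaL], ?_⟩
    rw [hpayB] at hv ⊢
    by_contra hcon
    push_neg at hcon
    rw [← heq', purePay_expand B hdi] at hcon
    have h7 : B d js ≤ B i js := by
      have e : xd d = 1 - xd i := by linarith
      rw [e] at hcon
      nlinarith [hxdpos i]
    have hel : minPure Bᵀ (Pi.single js (1:ℝ))
        ∈ {v | ∃ y ∈ Simp 2, v = minPure Bᵀ y} := ⟨_, single_mem js, rfl⟩
    have hptj : ∀ k, purePay Bᵀ (Pi.single js (1:ℝ)) k = B k js := fun k => by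
      rw [purePay_expand Bᵀ hj.symm, Pi.single_eq_same, Pi.single_eq_of_ne hj]
      simp [Matrix.transpose_apply]
    have hval : B d js ≤ minPure Bᵀ (Pi.single js 1) := by
      rw [minPure_eq, hptj 0, hptj 1]
      refine le_inf ?_ ?_
      · rcases two_cases hdi 0 with h | h
        · rw [h]
        · rw [h]; exact h7
      · rcases two_cases hdi 1 with h | h
        · rw [h]
        · rw [h]; exact h7
    have hbdd : BddAbove {v | ∃ y ∈ Simp 2, v = minPure Bᵀ y} := by
      refine ⟨B d js, ?_⟩
      rintro v ⟨y, hy, rfl⟩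
      have hym := mem_simp2.mp hy
      have hys : y js + y jo = 1 := simp_sum hj.symm hy
      have hptd : purePay Bᵀ y d = y js * B d js + y jo * B d jo := by
        rw [purePay_expand Bᵀ hj.symm]; simp [Matrix.transpose_apply]
      have hled : purePay Bᵀ y d ≤ B d js := by
        rw [hptd]
        have e : y js = 1 - y jo := by linarith
        rw [e]
        linarith [mul_nonneg (hym.1 jo) (sub_pos.mpr hBd).le]
      rw [minPure_eq]
      rcases two_cases hdi d with h | h
      · calc purePay Bᵀ y 0 ⊓ purePay Bᵀ y 1 ≤ purePay Bᵀ y d := by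
              rcases two_cases (show (0:Fin 2) ≠ 1 by decide) d with rfl | rfl
              · exact inf_le_left
              · exact inf_le_right
          _ ≤ B d js := hled
      · calc purePay Bᵀ y 0 ⊓ purePay Bᵀ y 1 ≤ purePay Bᵀ y d := by
              rcases two_cases (show (0:Fin 2) ≠ 1 by decide) d with rfl | rfl
              · exact inf_le_left
              · exact inf_le_right
          _ ≤ B d js := hled
    have hfin : B d js ≤ matVal Bᵀ := le_trans hval (le_csSup hbdd hel)
    linarith

/-- follower payoffs in non-degenerate 2×2 games. If conditions (ℓ1)
and (ℓ2) hold for player I, then for every Nash equilibrium `(x^N,y^N)`: there is a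
commitment optimal strategy `x^L` and an inducible best reply `j^F` realizing `α^L`
with follower payoff `β(x^L,e_{j^F}) < β(x^N,y^N)` iff `v_B < β(x^N,y^N)`. -/
theorem stmt17 (A B : Matrix (Fin 2) (Fin 2) ℝ)
    (hndI : NondegFor B) (hndII : NondegFor Aᵀ)
    (hl1 : ∃ i : Fin 2, ∃ x' ∈ Simp 2,
      ∀ j : Fin 2, purePay A (Pi.single i (1 : ℝ)) j < purePay A x' j)
    (hl2 : ∃ xd ∈ Simp 2, purePay B xd 0 = purePay B xd 1 ∧
      ∀ (xN yN : Fin 2 → ℝ), isNE A B xN yN →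
        ∃ j : Fin 2, pay A xN yN ≤ purePay A xd j) :
    ∀ (xN yN : Fin 2 → ℝ), isNE A B xN yN →
      ((∃ xL ∈ XLset A B, ∃ jF ∈ BRII B xL,
          purePay A xL jF = alphaL A B ∧ purePay B xL jF < pay B xN yN) ↔
        matVal Bᵀ < pay B xN yN) := by
  intro xN yN hNE
  obtain ⟨i, x', hx'S, hdom'⟩ := hl1
  obtain ⟨xd, hxdS, heqB, hge'⟩ := hl2
  have hge : ∃ j, pay A xN yN ≤ purePay A xd j := hge' xN yN hNE
  have hx'm := mem_simp2.mp hx'S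
  -- the other row strictly dominates row i
  obtain ⟨d, hdi⟩ : ∃ d : Fin 2, d ≠ i := by
    rcases two_cases (show (0:Fin 2) ≠ 1 by decide) i with rfl | rfl
    · exact ⟨1, by decide⟩
    · exact ⟨0, by decide⟩
  have hdom : ∀ j, A i j < A d j := by
    intro j
    have h := hdom' j
    rw [purePay_expand A hdi, purePay_expand A hdi, Pi.single_eq_same,
      Pi.single_eq_of_ne hdi] at h
    have hsum : x' d + x' i = 1 := simp_sum hdi hx'S
    have e : x' i = 1 - x' d := by linarith
    rw [e] at h
    nlinarith [hx'm.1 d]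
  have hBrow := row_ne hndI d i hdi
  rcases hBrow.lt_or_gt with hB | hB
  · exact main_lemma A B i d 1 0 hdi (by decide) hdom hB hndI xd hxdS heqB xN yN hNE hge
  · exact main_lemma A B i d 0 1 hdi (by decide) hdom hB hndI xd hxdS heqB xN yN hNE hge
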